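/- If miner i deviates from the Nash equilibrium allocation x_i* to x_i* + Δ with Δ > 0 while all other miners play their equilibrium allocations, then miner i's own utility loss equals Δ²·c_i·c* / (1 + c*·Δ). -/

import Mathlib

open Finset

/-- Payoff of miner `i` in the mining game with costs `c` and allocations `x`. -/
noncomputable def payoff {n : ℕ} (c x : Fin n → ℝ) (i : Fin n) : ℝ :=
  x i / (∑ j, x j) - c i * x i

/-- the deviator's own utility loss when deviating from the Nash
equilibrium `x_i*` to `x_i* + Δ` equals `Δ² c_i c* / (1 + c* Δ)`. -/
theorem deviator_own_loss (n : ℕ) (hn : 2 ≤ n) (c : Fin n → ℝ)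
    (hc : ∀ i, 0 < c i)
    (cstar : ℝ) (hcstar : cstar = (∑ j, c j) / ((n : ℝ) - 1))
    (hpart : ∀ i, c i < cstar)
    (xstar : Fin n → ℝ) (hx : ∀ i, xstar i = (1 - c i / cstar) / cstar)
    (i : Fin n) (Δ : ℝ) (hΔ : 0 < Δ) :
    payoff c xstar i - payoff c (Function.update xstar i (xstar i + Δ)) i
      = Δ ^ 2 * c i * cstar / (1 + cstar * Δ) := by
  have hs : 0 < cstar := lt_trans (hc i) (hpart i)
  have hs0 : cstar ≠ 0 := ne_of_gt hs
  have hn1 : ((n : ℝ) - 1) ≠ 0 := by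
    have : (2 : ℝ) ≤ (n : ℝ) := by exact_mod_cast hn
    linarith
  have hcsum : ∑ j, c j = cstar * ((n : ℝ) - 1) := by
    rw [hcstar]; field_simp
  have hS : ∑ j, xstar j = 1 / cstar := by
    have h1 : ∑ j, xstar j = ((n : ℝ) - (∑ j, c j) / cstar) / cstar := by
      simp only [hx, sub_div, Finset.sum_sub_distrib, Finset.sum_div]
      simp [Finset.card_univ, div_div, div_eq_mul_inv]
    rw [h1, hcsum]
    field_simp
    ring
  have hS' : ∑ j, Function.update xstar i (xstar i + Δ) j = 1 / cstar + Δ := by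
    rw [Finset.sum_update_of_mem (Finset.mem_univ i), Finset.sdiff_singleton_eq_erase]
    have h2 : xstar i + ∑ j ∈ Finset.univ.erase i, xstar j = 1 / cstar := by
      rw [Finset.add_sum_erase _ _ (Finset.mem_univ i)]; exact hS
    linarith
  have hd : (1 : ℝ) + cstar * Δ ≠ 0 := by positivity
  have hd2 : 1 / cstar + Δ ≠ 0 := by positivity
  have key : payoff c xstar i - payoff c (Function.update xstar i (xstar i + Δ)) i
      = xstar i / (1 / cstar) - c i * xstar i
        - ((xstar i + Δ) / (1 / cstar + Δ) - c i * (xstar i + Δ)) := by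
    simp [payoff, hS, hS']
  rw [key, hx i]
  field_simp
  ring
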